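/- Whenever the linear vector optimization problem (P) with feasible set S = {x : Bx ≥ b} is feasible (S ≠ ∅), the recession cone of the upper image 𝒫 = P[S] + C equals the upper image of the homogeneous problem: 𝒫_∞ = P[S^h] + C, where S^h = {x : Bx ≥ 0}. -/

import Mathlib

open Matrix Finset

variable {κ : Type*} [Fintype κ] {E : Type*} [AddCommGroup E] [Module ℝ E]

/-- The cone generated by a finite family `w`. -/
def coneOf (w : κ → E) : Set E :=
  {y | ∃ c : κ → ℝ, 0 ≤ c ∧ y = ∑ i, c i • w i}

/-- Conic Carathéodory: any nonnegative combination can be rewritten with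
linearly independent support. -/
theorem caratheodory_cone (w : κ → E) (c : κ → ℝ) (hc : 0 ≤ c) :
    ∃ c' : κ → ℝ, 0 ≤ c' ∧ (∑ i, c' i • w i = ∑ i, c i • w i) ∧
      LinearIndependent ℝ (fun i : {i // c' i ≠ 0} => w i) := by
  classical
  generalize hN : (Finset.univ.filter (fun i => c i ≠ 0)).card = N
  induction N using Nat.strong_induction_on generalizing c with
  | _ N ih =>
  by_cases hli : LinearIndependent ℝ (fun i : {i // c i ≠ 0} => w i)
  · exact ⟨c, hc, rfl, hli⟩
  · rw [Fintype.not_linearIndependent_iff] at hli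
    obtain ⟨g, hg0, i₁, hi₁⟩ := hli
    -- extend g by zero
    have hdt : ∃ dt : κ → ℝ, (∀ i (h : c i ≠ 0), dt i = g ⟨i, h⟩) ∧
        (∀ i, c i = 0 → dt i = 0) :=
      ⟨fun i => if h : c i ≠ 0 then g ⟨i, h⟩ else 0,
        fun i h => dif_pos h, fun i h => dif_neg (by simp [h])⟩
    obtain ⟨dt, hdt1, hdt2⟩ := hdt
    have hdtsum : ∑ i, dt i • w i = 0 := by
      have e1 : ∑ i, dt i • w i
          = ∑ i ∈ Finset.univ.filter (fun i => c i ≠ 0), dt i • w i := by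
        refine (Finset.sum_filter_of_ne ?_).symm
        intro i _ hne
        by_contra h
        exact hne (by rw [hdt2 i h, zero_smul])
      have e2 : ∑ i ∈ Finset.univ.filter (fun i => c i ≠ 0), dt i • w i
          = ∑ i : {i // c i ≠ 0}, dt (i : κ) • w (i : κ) :=
        Finset.sum_subtype _ (by simp) _
      rw [e1, e2, ← hg0]
      exact Finset.sum_congr rfl fun i _ => by rw [hdt1 (i : κ) i.2]
    have hdtne : dt i₁ ≠ 0 := by rw [hdt1 (i₁ : κ) i₁.2]; exact hi₁
    -- make it have a positive entry
    have hd : ∃ d : κ → ℝ, (∑ i, d i • w i = 0) ∧ (∃ i, 0 < d i) ∧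
        (∀ i, c i = 0 → d i = 0) := by
      by_cases h : ∃ i, 0 < dt i
      · exact ⟨dt, hdtsum, h, hdt2⟩
      · push_neg at h
        refine ⟨-dt, ?_, ⟨i₁, ?_⟩, fun i hi => by simp [hdt2 i hi]⟩
        · simp only [Pi.neg_apply, neg_smul, Finset.sum_neg_distrib, hdtsum, neg_zero]
        · simpa using lt_of_le_of_ne (h i₁) hdtne
    obtain ⟨d, hdsum, hdpos, hdsupp⟩ := hd
    -- minimize ratio
    have hTne : (Finset.univ.filter (fun i => 0 < d i)).Nonempty := by
      obtain ⟨i, hi⟩ := hdpos; exact ⟨i, by simp [hi]⟩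
    obtain ⟨i₀, hi₀T, hi₀min⟩ :=
      Finset.exists_min_image _ (fun i => c i / d i) hTne
    have hd₀ : 0 < d i₀ := by simpa using hi₀T
    set τ : ℝ := c i₀ / d i₀ with hτ
    have hτ0 : 0 ≤ τ := div_nonneg (hc i₀) hd₀.le
    have hc'0 : 0 ≤ fun i => c i - τ * d i := by
      intro i
      simp only [Pi.zero_apply, sub_nonneg]
      by_cases hdi : 0 < d i
      · have h1 : τ ≤ c i / d i := hi₀min i (by simp [hdi])
        have := mul_le_mul_of_nonneg_right h1 hdi.le
        rwa [div_mul_cancel₀ _ hdi.ne'] at this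
      · push_neg at hdi
        have : τ * d i ≤ 0 := mul_nonpos_of_nonneg_of_nonpos hτ0 hdi
        have hci : (0:ℝ) ≤ c i := hc i
        linarith
    have hc'sum : ∑ i, (c i - τ * d i) • w i = ∑ i, c i • w i := by
      simp only [sub_smul, ← smul_smul, Finset.sum_sub_distrib, ← Finset.smul_sum,
        hdsum, smul_zero, sub_zero]
    have hsubset : Finset.univ.filter (fun i => (c i - τ * d i) ≠ 0) ⊂
        Finset.univ.filter (fun i => c i ≠ 0) := by
      constructor
      · intro i hi
        simp only [Finset.mem_filter, Finset.mem_univ, true_and] at hi ⊢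
        intro hci
        exact hi (by rw [hci, hdsupp i hci]; ring)
      · intro hsub
        have hi₀mem : i₀ ∈ Finset.univ.filter (fun i => c i ≠ 0) := by
          simp only [Finset.mem_filter, Finset.mem_univ, true_and]
          intro hci
          rw [hdsupp i₀ hci] at hd₀; exact lt_irrefl 0 hd₀
        have := hsub hi₀mem
        simp only [Finset.mem_filter, Finset.mem_univ, true_and] at this
        exact this (by rw [hτ]; field_simp; ring)
    obtain ⟨c'', h1, h2, h3⟩ := ih _ (hN ▸ Finset.card_lt_card hsubset) _ hc'0 rfl
    exact ⟨c'', h1, h2.trans hc'sum, h3⟩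

theorem coneOf_convex (w : κ → E) : Convex ℝ (coneOf w) := by
  rintro x ⟨cx, hcx, rfl⟩ y ⟨cy, hcy, rfl⟩ a b ha hb _
  refine ⟨a • cx + b • cy, ?_, ?_⟩
  · intro i
    have h1 : (0:ℝ) ≤ cx i := hcx i
    have h2 : (0:ℝ) ≤ cy i := hcy i
    have : (0:ℝ) ≤ a * cx i + b * cy i := by positivity
    simpa using this
  · simp only [Finset.smul_sum, ← Finset.sum_add_distrib, Pi.add_apply, Pi.smul_apply,
      smul_eq_mul, add_smul, smul_smul]

theorem zero_mem_coneOf (w : κ → E) : 0 ∈ coneOf w := ⟨0, le_refl _, by simp⟩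

theorem mem_coneOf_self (w : κ → E) (i₀ : κ) : w i₀ ∈ coneOf w := by
  classical
  refine ⟨Pi.single i₀ 1, ?_, ?_⟩
  · intro i
    by_cases h : i = i₀ <;> simp [Pi.single_apply, h]
  · simp [Pi.single_apply, ite_smul]

theorem smul_mem_coneOf (w : κ → E) {y : E} (hy : y ∈ coneOf w) {t : ℝ} (ht : 0 ≤ t) :
    t • y ∈ coneOf w := by
  obtain ⟨c, hc, rfl⟩ := hy
  refine ⟨t • c, fun i => by simpa using mul_nonneg ht (hc i), ?_⟩
  simp [Finset.smul_sum, smul_smul]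

/-- A finitely generated cone in `ι → ℝ` is closed. -/
theorem coneOf_isClosed {ι : Type*} [Fintype ι] (w : κ → (ι → ℝ)) :
    IsClosed (coneOf w) := by
  classical
  -- the linear "combination" map for a subset T
  let L : ∀ T : Finset κ, ({i // i ∈ T} → ℝ) →ₗ[ℝ] (ι → ℝ) := fun T =>
    { toFun := fun c => ∑ i : T, c i • w i
      map_add' := fun c₁ c₂ => by simp [add_smul, Finset.sum_add_distrib]
      map_smul' := fun r c => by simp [Finset.smul_sum, smul_smul] }
  have key : coneOf w = ⋃ (T : Finset κ) (_ : LinearIndependent ℝ (fun i : T => w i)),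
      (L T) '' {c | 0 ≤ c} := by
    ext y
    constructor
    · rintro ⟨c, hc, rfl⟩
      obtain ⟨c', hc', hsum, hli⟩ := caratheodory_cone w c hc
      set T : Finset κ := Finset.univ.filter (fun i => c' i ≠ 0) with hT
      have hmemT : ∀ i : κ, i ∈ T ↔ c' i ≠ 0 := by simp [hT]
      have hliT : LinearIndependent ℝ (fun i : T => w i) := by
        have hinj : Function.Injective
            (fun i : {i // i ∈ T} => (⟨i, (hmemT i).1 i.2⟩ : {i // c' i ≠ 0})) := by
          intro a b h
          have := congrArg Subtype.val h
          exact Subtype.ext this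
        exact hli.comp _ hinj
      refine Set.mem_iUnion.2 ⟨T, Set.mem_iUnion.2 ⟨hliT, ?_⟩⟩
      refine ⟨fun i => c' i, fun i => hc' i, ?_⟩
      rw [← hsum]
      show ∑ i : T, c' (i : κ) • w (i : κ) = _
      calc ∑ i : T, c' (i : κ) • w (i : κ) = ∑ i ∈ T, c' i • w i :=
            Finset.sum_coe_sort T (fun i => c' i • w i)
        _ = ∑ i : κ, c' i • w i :=
            Finset.sum_filter_of_ne
              (by intro i _ hne hc0; exact hne (by rw [hc0, zero_smul]))
    · intro hy
      obtain ⟨T, hT⟩ := Set.mem_iUnion.1 hy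
      obtain ⟨_, hy⟩ := Set.mem_iUnion.1 hT
      obtain ⟨c, hc, rfl⟩ := hy
      refine ⟨fun i => if h : i ∈ T then c ⟨i, h⟩ else 0, ?_, ?_⟩
      · intro i
        by_cases h : i ∈ T
        · simpa [h] using hc ⟨i, h⟩
        · simp [h]
      · show (∑ i : T, c i • w i) = _
        have : ∀ i : T, c i • w i
            = (fun j => if h : j ∈ T then c ⟨j, h⟩ else 0) (i : κ) • w (i : κ) := by
          intro i; simp [i.2]
        rw [Finset.sum_congr rfl (fun i _ => this i),
          ← Finset.sum_subtype T (fun i => Iff.rfl)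
            (fun i => (fun j => if h : j ∈ T then c ⟨j, h⟩ else 0) i • w i)]
        refine Finset.sum_subset (Finset.subset_univ T) ?_
        intro i _ hiT
        simp [hiT]
  rw [key]
  apply isClosed_iUnion_of_finite
  intro T
  rw [Set.iUnion_eq_if]
  split_ifs with hli
  · -- image of the closed orthant under an injective linear map
    have hinj : Function.Injective (L T) := by
      rw [← LinearMap.ker_eq_bot]
      rw [Fintype.linearIndependent_iff] at hli
      ext c
      simp only [LinearMap.mem_ker, Submodule.mem_bot]
      constructor
      · intro h
        funext i
        exact hli c h i
      · rintro rfl; simp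
    have hemb := LinearMap.isClosedEmbedding_of_injective (f := L T)
      (LinearMap.ker_eq_bot.2 hinj)
    apply hemb.isClosedMap
    have : {c : {i // i ∈ T} → ℝ | 0 ≤ c} = ⋂ i : T, {c | 0 ≤ c i} := by
      ext c; simp [Pi.le_def]
    rw [this]
    exact isClosed_iInter fun i =>
      isClosed_le continuous_const (continuous_apply i)
  · exact isClosed_empty

/-- Farkas lemma: if `e ≤ A z` has no solution, there is a nonnegative `u` with
`uᵀ A = 0` and `⟨u, e⟩ > 0`. -/
theorem farkas {I J : Type*} [Fintype I] [Fintype J] [DecidableEq I]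
    (A : Matrix I J ℝ) (e : I → ℝ) (h : ∀ z : J → ℝ, ¬ e ≤ A.mulVec z) :
    ∃ u : I → ℝ, 0 ≤ u ∧ (∀ j, ∑ i, u i * A i j = 0) ∧ 0 < ∑ i, u i * e i := by
  classical
  -- the generating family of the cone {A z - s : s ≥ 0}
  set w : (J ⊕ J) ⊕ I → (I → ℝ) :=
    Sum.elim (Sum.elim (fun j => fun i => A i j) (fun j => fun i => -(A i j)))
      (fun i₀ => -(Pi.single i₀ 1)) with hw
  have hK : e ∉ coneOf w := by
    rintro ⟨c, hc, hce⟩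
    apply h (fun j => c (Sum.inl (Sum.inl j)) - c (Sum.inl (Sum.inr j)))
    intro i
    rw [hce]
    have hsum : (∑ k, c k • w k) i
        = ∑ j, c (Sum.inl (Sum.inl j)) * A i j - ∑ j, c (Sum.inl (Sum.inr j)) * A i j
          - c (Sum.inr i) := by
      rw [Finset.sum_apply]
      rw [Fintype.sum_sum_type]
      rw [Fintype.sum_sum_type]
      simp only [hw, Sum.elim_inl, Sum.elim_inr, Pi.smul_apply, smul_eq_mul,
        Pi.neg_apply, mul_neg, Pi.single_apply]
      rw [Finset.sum_neg_distrib, Finset.sum_neg_distrib,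
        show (∑ x : I, c (Sum.inr x) * if i = x then 1 else 0) = c (Sum.inr i) by simp]
      ring
    rw [hsum, Matrix.mulVec]
    simp only [dotProduct]
    have hci : 0 ≤ c (Sum.inr i) := hc _
    have : ∑ j, A i j * (c (Sum.inl (Sum.inl j)) - c (Sum.inl (Sum.inr j)))
        = ∑ j, c (Sum.inl (Sum.inl j)) * A i j - ∑ j, c (Sum.inl (Sum.inr j)) * A i j := by
      rw [← Finset.sum_sub_distrib]; congr 1; funext j; ring
    rw [this]
    linarith
  obtain ⟨f, u0, hfu, hfe⟩ := geometric_hahn_banach_closed_point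
    (coneOf_convex w) (coneOf_isClosed w) hK
  -- f is nonpositive on the cone
  have hfnonpos : ∀ v ∈ coneOf w, f v ≤ 0 := by
    intro v hv
    by_contra hpos
    push_neg at hpos
    have ht : (0:ℝ) ≤ (max u0 0 + 1) / f v := div_nonneg (by positivity) hpos.le
    have := hfu _ (smul_mem_coneOf w hv ht)
    rw [f.map_smul, smul_eq_mul, div_mul_cancel₀ _ hpos.ne'] at this
    have : u0 < max u0 0 + 1 := by
      have := le_max_left u0 0; linarith
    linarith [hfu _ (smul_mem_coneOf w hv ht), this]
  have hu0pos : 0 < u0 := by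
    have := hfu 0 (zero_mem_coneOf w)
    simpa using this
  set u : I → ℝ := fun i => f (Pi.single i 1) with hu
  have hfy : ∀ y : I → ℝ, f y = ∑ i, y i * u i := by
    intro y
    conv_lhs => rw [pi_eq_sum_univ y]
    rw [map_sum]
    exact Finset.sum_congr rfl fun i _ => by
      rw [show (fun j => (if i = j then (1:ℝ) else 0)) = Pi.single i 1 by
          funext j; simp [Pi.single_apply, eq_comm]]
      rw [f.map_smul]; simp [hu]
  refine ⟨u, ?_, ?_, ?_⟩
  · intro i
    have := hfnonpos _ (mem_coneOf_self w (Sum.inr i))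
    simp only [hw, Sum.elim_inr, map_neg] at this
    simpa [hu] using neg_nonpos.1 this
  · intro j
    have h1 := hfnonpos _ (mem_coneOf_self w (Sum.inl (Sum.inl j)))
    have h2 := hfnonpos _ (mem_coneOf_self w (Sum.inl (Sum.inr j)))
    simp only [hw, Sum.elim_inl, Sum.elim_inr] at h1 h2
    have hcol : f (fun i => A i j) = ∑ i, A i j * u i := hfy _
    have hcol2 : f (fun i => -(A i j)) = -f (fun i => A i j) := by
      rw [show (fun i => -(A i j)) = -(fun i => A i j) by rfl, map_neg]
    rw [hcol2] at h2
    have : f (fun i => A i j) = 0 := le_antisymm h1 (by linarith)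
    rw [hcol] at this
    rw [← this]
    exact Finset.sum_congr rfl fun i _ => by ring
  · have := hfy e
    have h3 : u0 < f e := hfe
    rw [this] at h3
    calc (0:ℝ) < u0 := hu0pos
      _ < _ := h3
      _ = ∑ i, u i * e i := Finset.sum_congr rfl fun i _ => by ring

/-- If `c + t • d ≤ A z` is solvable for every `t ≥ 0`, then `d ≤ A z` is solvable. -/
theorem solvable_of_ray {I J : Type*} [Fintype I] [Fintype J] [DecidableEq I]
    (A : Matrix I J ℝ) (c d : I → ℝ)
    (h : ∀ t : ℝ, 0 ≤ t → ∃ z : J → ℝ, c + t • d ≤ A.mulVec z) :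
    ∃ z : J → ℝ, d ≤ A.mulVec z := by
  by_contra hcon
  push_neg at hcon
  obtain ⟨u, hu0, huA, hud⟩ := farkas A d hcon
  set α := ∑ i, u i * c i with hα
  set β := ∑ i, u i * d i with hβ
  set t : ℝ := max 0 ((1 - α) / β) with htdef
  have ht0 : 0 ≤ t := le_max_left _ _
  obtain ⟨z, hz⟩ := h t ht0
  -- u ⬝ (A z) = 0
  have hzero : ∑ i, u i * A.mulVec z i = 0 := by
    have : ∑ i, u i * A.mulVec z i = ∑ j, (∑ i, u i * A i j) * z j := by
      simp only [Matrix.mulVec, dotProduct, Finset.mul_sum, Finset.sum_mul]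
      rw [Finset.sum_comm]
      exact Finset.sum_congr rfl fun j _ => Finset.sum_congr rfl fun i _ => by ring
    rw [this]
    simp [huA]
  have hge : α + t * β ≤ ∑ i, u i * A.mulVec z i := by
    have : ∀ i, u i * (c i + t * d i) ≤ u i * A.mulVec z i := fun i =>
      mul_le_mul_of_nonneg_left (by simpa using hz i) (hu0 i)
    calc α + t * β = ∑ i, u i * (c i + t * d i) := by
          simp only [hα, hβ, mul_add, Finset.sum_add_distrib, Finset.mul_sum]
          congr 1
          exact Finset.sum_congr rfl fun i _ => by ring
      _ ≤ _ := Finset.sum_le_sum fun i _ => this i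
  have htβ : 1 - α ≤ t * β := by
    have h1 : (1 - α) / β ≤ t := le_max_right _ _
    calc 1 - α = ((1 - α) / β) * β := by field_simp
      _ ≤ t * β := mul_le_mul_of_nonneg_right h1 hud.le
  rw [hzero] at hge
  linarith

/-- If S ≠ ∅, the recession cone of the upper image 𝒫 = P[S] + C equals the upper
image of the homogeneous problem, P[Sʰ] + C. -/
theorem recession_cone_of_upper_image
    (q n m p : ℕ)
    (B : Matrix (Fin m) (Fin n) ℝ) (b : Fin m → ℝ) (P : Matrix (Fin q) (Fin n) ℝ)
    (Y : Matrix (Fin q) (Fin p) ℝ)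
    (C : Set (Fin q → ℝ))
    (hC : C = {y | ∃ lam : Fin p → ℝ, 0 ≤ lam ∧ y = Y.mulVec lam})
    (S : Set (Fin n → ℝ)) (hS : S = {x | b ≤ B.mulVec x}) (hSne : S.Nonempty)
    (Sh : Set (Fin n → ℝ)) (hSh : Sh = {x | 0 ≤ B.mulVec x})
    (UP : Set (Fin q → ℝ))
    (hUP : UP = {y | ∃ x ∈ S, ∃ k ∈ C, y = P.mulVec x + k})
    (UPrec : Set (Fin q → ℝ))
    (hUPrec : UPrec = {k | ∀ y ∈ UP, ∀ t : ℝ, 0 ≤ t → y + t • k ∈ UP}) :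
    UPrec = {y | ∃ x ∈ Sh, ∃ k ∈ C, y = P.mulVec x + k} := by
  classical
  subst hC hS hSh hUP hUPrec
  -- the combined constraint matrix
  set A : Matrix ((Fin m ⊕ Fin p) ⊕ (Fin q ⊕ Fin q)) (Fin n ⊕ Fin p) ℝ := fun i j =>
    match i, j with
    | Sum.inl (Sum.inl i), Sum.inl j => B i j
    | Sum.inl (Sum.inl _), Sum.inr _ => 0
    | Sum.inl (Sum.inr _), Sum.inl _ => 0
    | Sum.inl (Sum.inr l), Sum.inr j => if l = j then 1 else 0
    | Sum.inr (Sum.inl i), Sum.inl j => P i j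
    | Sum.inr (Sum.inl i), Sum.inr j => Y i j
    | Sum.inr (Sum.inr i), Sum.inl j => -P i j
    | Sum.inr (Sum.inr i), Sum.inr j => -Y i j
    with hA
  have hmv : ∀ z : (Fin n ⊕ Fin p) → ℝ,
      (∀ i, A.mulVec z (Sum.inl (Sum.inl i)) = B.mulVec (z ∘ Sum.inl) i) ∧
      (∀ l, A.mulVec z (Sum.inl (Sum.inr l)) = z (Sum.inr l)) ∧
      (∀ i, A.mulVec z (Sum.inr (Sum.inl i))
          = P.mulVec (z ∘ Sum.inl) i + Y.mulVec (z ∘ Sum.inr) i) ∧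
      (∀ i, A.mulVec z (Sum.inr (Sum.inr i))
          = -(P.mulVec (z ∘ Sum.inl) i + Y.mulVec (z ∘ Sum.inr) i)) := by
    intro z
    refine ⟨fun i => ?_, fun l => ?_, fun i => ?_, fun i => ?_⟩ <;>
      simp only [Matrix.mulVec, dotProduct, hA, Fintype.sum_sum_type,
        Function.comp] <;>
      simp [ite_mul, Finset.sum_ite_eq', neg_mul, Finset.sum_neg_distrib,
        ← Finset.sum_add_distrib, neg_add] <;> ring
  ext y
  simp only [Set.mem_setOf_eq]
  constructor
  · -- hard direction
    intro hy
    obtain ⟨x₀, hx₀⟩ := hSne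
    have hy₀ : P.mulVec x₀ ∈ {y | ∃ x ∈ {x | b ≤ B.mulVec x}, ∃ k ∈
        {y | ∃ lam : Fin p → ℝ, 0 ≤ lam ∧ y = Y.mulVec lam}, y = P.mulVec x + k} :=
      ⟨x₀, hx₀, 0, ⟨0, le_refl _, by simp⟩, by simp⟩
    set c : ((Fin m ⊕ Fin p) ⊕ (Fin q ⊕ Fin q)) → ℝ := Sum.elim (Sum.elim b 0)
      (Sum.elim (P.mulVec x₀) (-(P.mulVec x₀))) with hc
    set d : ((Fin m ⊕ Fin p) ⊕ (Fin q ⊕ Fin q)) → ℝ := Sum.elim 0 (Sum.elim y (-y)) with hd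
    obtain ⟨z, hz⟩ := solvable_of_ray A c d (by
      intro t ht
      obtain ⟨x, hx, kc, ⟨lam, hlam, rfl⟩, heq⟩ := hy _ hy₀ t ht
      refine ⟨Sum.elim x lam, ?_⟩
      obtain ⟨e1, e2, e3, e4⟩ := hmv (Sum.elim x lam)
      have hco : (Sum.elim x lam ∘ Sum.inl) = x := rfl
      have hco2 : (Sum.elim x lam ∘ Sum.inr) = lam := rfl
      rw [hco] at e1 e3 e4
      rw [hco2] at e3 e4
      have heq' : ∀ i, P.mulVec x₀ i + t * y i = P.mulVec x i + Y.mulVec lam i := by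
        intro i
        have := congrFun heq i
        simpa using this
      rintro ((i | l) | (i | i))
      · simpa [hc, hd, e1] using hx i
      · simpa [hc, hd, e2 l] using hlam l
      · simp only [hc, hd, Pi.add_apply, Pi.smul_apply, Sum.elim_inl, Sum.elim_inr,
          smul_eq_mul, e3 i]
        rw [← heq' i]
      · simp only [hc, hd, Pi.add_apply, Pi.smul_apply, Sum.elim_inl, Sum.elim_inr,
          smul_eq_mul, e4 i, Pi.neg_apply]
        rw [← heq' i]
        ring_nf
        exact le_refl _)
    obtain ⟨e1, e2, e3, e4⟩ := hmv z
    refine ⟨z ∘ Sum.inl, ?_, Y.mulVec (z ∘ Sum.inr), ⟨z ∘ Sum.inr, ?_, rfl⟩, ?_⟩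
    · intro i
      simpa [hd, e1 i] using hz (Sum.inl (Sum.inl i))
    · intro l
      simpa [hd, e2 l] using hz (Sum.inl (Sum.inr l))
    · funext i
      have h1 := hz (Sum.inr (Sum.inl i))
      have h2 := hz (Sum.inr (Sum.inr i))
      simp only [hd, Sum.elim_inl, Sum.elim_inr, e3 i, e4 i, Pi.neg_apply] at h1 h2
      have := le_antisymm (by linarith : P.mulVec (z ∘ Sum.inl) i
        + Y.mulVec (z ∘ Sum.inr) i ≤ y i) h1
      simpa using this.symm
  · -- easy direction
    rintro ⟨xh, hxh, kh, ⟨lamh, hlamh, rfl⟩, rfl⟩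
    rintro y' ⟨x', hx', k', ⟨lam', hlam', rfl⟩, rfl⟩ t ht
    refine ⟨x' + t • xh, ?_, Y.mulVec (lam' + t • lamh),
      ⟨lam' + t • lamh, ?_, rfl⟩, ?_⟩
    · intro i
      have h1 : b i ≤ B.mulVec x' i := hx' i
      have h2 : (0:ℝ) ≤ B.mulVec xh i := hxh i
      have : B.mulVec (x' + t • xh) i = B.mulVec x' i + t * B.mulVec xh i := by
        rw [Matrix.mulVec_add, Matrix.mulVec_smul]
        simp
      rw [this]
      nlinarith
    · intro l
      have h1 : (0:ℝ) ≤ lam' l := hlam' l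
      have h2 : (0:ℝ) ≤ lamh l := hlamh l
      have : (0:ℝ) ≤ lam' l + t * lamh l := by nlinarith
      simpa using this
    · rw [Matrix.mulVec_add, Matrix.mulVec_smul, Matrix.mulVec_add, Matrix.mulVec_smul]
      funext i
      simp only [Pi.add_apply, Pi.smul_apply, smul_eq_mul]
      ring
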